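/- Let M be a Noetherian (t−1)-invertible Λ-module with t² − 1 ∈ Ann(M). Then M is a finite abelian group of odd order. -/

import Mathlib

open Polynomial

/-- `Λ` is the ring `ℤ[t,t⁻¹]` of Laurent polynomials with integer coefficients. -/
abbrev Λ : Type := LaurentPolynomial ℤ

/-- `tL` is the element `t` of `Λ = ℤ[t,t⁻¹]`. -/
noncomputable def tL : Λ := LaurentPolynomial.T 1

/-- A Noetherian (t−1)-invertible Λ-module annihilated by `t² − 1` is a finite abelian group
of odd order. -/
theorem unipotence_index_two_finite_odd (M : Type) [AddCommGroup M] [Module Λ M]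
    [IsNoetherian Λ M]
    (hM : Function.Bijective (fun v : M => (tL - 1) • v))
    (hann : ∀ v : M, (tL ^ 2 - 1) • v = 0) :
    Finite M ∧ Odd (Nat.card M) := by
  -- t acts as -1
  have ht : ∀ v : M, tL • v = -v := by
    intro v
    have h1 : (tL - 1) • ((tL + 1) • v) = (tL - 1) • (0 : M) := by
      rw [smul_zero, ← mul_smul]
      have he : (tL - 1) * (tL + 1) = tL ^ 2 - 1 := by ring
      rw [he]; exact hann v
    have h2 := hM.injective h1
    rw [add_smul, one_smul] at h2
    exact eq_neg_of_add_eq_zero_left h2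
  -- (t-1) acts as -2
  have hneg2 : ∀ v : M, (tL - 1) • v = (-2 : ℤ) • v := by
    intro v
    rw [sub_smul, one_smul, ht v]
    have h : (-2 : ℤ) • v = -v - v := by
      rw [neg_smul, two_smul]; abel
    rw [h, sub_eq_add_neg]
  -- T n acts as ±1 (as an integer multiple)
  have hTneg : ∀ v : M, (LaurentPolynomial.T (-1) : Λ) • v = -v := by
    intro v
    have h1 : (LaurentPolynomial.T (-1) : Λ) • (tL • v) = v := by
      rw [← mul_smul]
      have he : (LaurentPolynomial.T (-1) : Λ) * tL = 1 := by
        rw [tL, ← LaurentPolynomial.T_add]; norm_num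
      rw [he, one_smul]
    rw [ht, smul_neg] at h1
    exact neg_eq_iff_eq_neg.mp h1
  have hT : ∀ n : ℤ, ∀ v : M, ∃ m : ℤ, (LaurentPolynomial.T n : Λ) • v = m • v := by
    intro n
    induction n using Int.induction_on with
    | zero => intro v; exact ⟨1, by simp⟩
    | succ k ih =>
        intro v
        obtain ⟨m, hm⟩ := ih (-v)
        refine ⟨-m, ?_⟩
        have : (LaurentPolynomial.T ((k : ℤ) + 1) : Λ) • v = (LaurentPolynomial.T (k : ℤ) : Λ) • (tL • v) := by
          rw [← mul_smul, tL, ← LaurentPolynomial.T_add]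
        rw [this, ht, hm, smul_neg, ← neg_smul]
    | pred k ih =>
        intro v
        obtain ⟨m, hm⟩ := ih (-v)
        refine ⟨-m, ?_⟩
        have : (LaurentPolynomial.T (-(k : ℤ) - 1) : Λ) • v
            = (LaurentPolynomial.T (-(k : ℤ)) : Λ) • ((LaurentPolynomial.T (-1) : Λ) • v) := by
          rw [← mul_smul, ← LaurentPolynomial.T_add]; ring_nf
        rw [this, hTneg, hm, smul_neg, ← neg_smul]
  -- every f ∈ Λ acts as an integer multiple
  have hact : ∀ f : Λ, ∀ v : M, ∃ m : ℤ, f • v = m • v := by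
    intro f
    induction f using LaurentPolynomial.induction_on' with
    | add p q hp hq =>
        intro v
        obtain ⟨a, ha⟩ := hp v
        obtain ⟨b, hb⟩ := hq v
        exact ⟨a + b, by rw [add_smul, ha, hb, add_smul]⟩
    | C_mul_T n a =>
        intro v
        obtain ⟨m, hm⟩ := hT n v
        refine ⟨a * m, ?_⟩
        rw [mul_smul, hm, LaurentPolynomial.C_eq_algebraMap, algebraMap_smul, mul_smul]
  -- M is finitely generated over ℤ
  obtain ⟨S, hS⟩ := (IsNoetherian.noetherian (⊤ : Submodule Λ M))
  have hfg : (⊤ : Submodule ℤ M).FG := by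
    refine ⟨S, le_antisymm le_top ?_⟩
    intro v _
    -- the ℤ-span of S is a Λ-submodule
    let N : Submodule Λ M :=
      { carrier := (Submodule.span ℤ (S : Set M) : Set M)
        add_mem' := fun ha hb => Submodule.add_mem _ ha hb
        zero_mem' := Submodule.zero_mem _
        smul_mem' := by
          intro f x hx
          obtain ⟨m, hm⟩ := hact f x
          simpa [hm] using Submodule.smul_mem _ m hx }
    have hSN : (S : Set M) ⊆ ↑N := Submodule.subset_span
    have : Submodule.span Λ (S : Set M) ≤ N := Submodule.span_le.mpr hSN
    rw [hS] at this
    exact this (Submodule.mem_top)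
  haveI : Module.Finite ℤ M := ⟨hfg⟩
  -- Nakayama with the ideal (2)
  have h2surj : (⊤ : Submodule ℤ M) ≤ (Ideal.span {(2 : ℤ)}) • ⊤ := by
    intro v _
    obtain ⟨w, hw⟩ := hM.surjective v
    simp only at hw
    rw [hneg2] at hw
    have : (2 : ℤ) • (-w) = v := by rw [smul_neg, ← neg_smul]; exact hw
    rw [← this]
    exact Submodule.smul_mem_smul (Ideal.mem_span_singleton_self 2) trivial
  obtain ⟨r, hr1, hr0⟩ :=
    Submodule.exists_sub_one_mem_and_smul_eq_zero_of_fg_of_le_smul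
      (Ideal.span {(2 : ℤ)}) ⊤ hfg h2surj
  rw [Ideal.mem_span_singleton] at hr1
  have hrodd : Odd r := by
    obtain ⟨k, hk⟩ := hr1
    exact ⟨k, by linarith⟩
  have hrne : r ≠ 0 := by
    rintro rfl
    simp at hrodd
  -- finiteness
  have htor : Module.IsTorsion ℤ M := by
    intro x
    exact ⟨⟨r, mem_nonZeroDivisors_of_ne_zero hrne⟩, hr0 x trivial⟩
  have hfin : Finite M := Module.finite_of_fg_torsion M htor
  refine ⟨hfin, ?_⟩
  -- 2 acts injectively
  have hinj2 : ∀ x : M, (2 : ℤ) • x = 0 → x = 0 := by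
    intro x hx
    apply hM.injective
    show (tL - 1) • x = (tL - 1) • (0 : M)
    rw [hneg2, hneg2, smul_zero, neg_smul, hx, neg_zero]
  -- odd order via Cauchy
  rw [← Nat.not_even_iff_odd]
  intro heven
  haveI : Fintype M := Fintype.ofFinite M
  have hdvd : 2 ∣ Fintype.card M := by
    rw [← Nat.card_eq_fintype_card]
    exact heven.two_dvd
  obtain ⟨x, hx⟩ := exists_prime_addOrderOf_dvd_card 2 hdvd
  have hx2 : (2 : ℤ) • x = 0 := by
    have h : (2 : ℕ) • x = 0 := by
      rw [← hx]; exact addOrderOf_nsmul_eq_zero x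
    rw [show ((2:ℤ)) = ((2:ℕ):ℤ) by norm_num, natCast_zsmul]
    exact h
  have := hinj2 x hx2
  rw [this, addOrderOf_zero] at hx
  norm_num at hx
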